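/- In the periodic regime of the greedy matrix A(n): if the defining matrices satisfy M^{k+p̄} = M^k for some k ≥ 2 and period candidate p̄, then l(k+p̄) = l(k) + p̄, where l(k) is the index of the first column that is not complete (contains fewer than n+1 ones) among the columns of the matrix consisting of the first k-1 rows of A(n). -/
import Mathlib


/-- Number of ones in row `k` strictly to the left of column `l` (columns `1..l-1`). -/
def rowOnes (a : ℕ → ℕ → Bool) (k l : ℕ) : ℕ :=
  ((Finset.Ico 1 l).filter (fun j => a k j = true)).card

/-- Number of ones in column `l` strictly above row `k` (rows `1..k-1`). -/
def colOnes (a : ℕ → ℕ → Bool) (k l : ℕ) : ℕ :=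
  ((Finset.Ico 1 k).filter (fun i => a i l = true)).card

/-- The greedy (first-choice) matrix `A(n)`: entries are placed row by row, left to
right; a one is placed at `(k,l)` unless the row already has `n+1` ones to the left,
the column already has `n+1` ones above, or a rectangle of ones would be created. -/
def IsGreedy (n : ℕ) (a : ℕ → ℕ → Bool) : Prop :=
  (∀ i j, i = 0 ∨ j = 0 → a i j = false) ∧
  ∀ k l, 1 ≤ k → 1 ≤ l →
    (a k l = true ↔
      rowOnes a k l < n + 1 ∧ colOnes a k l < n + 1 ∧
      ¬ ∃ i j, 1 ≤ i ∧ i < k ∧ 1 ≤ j ∧ j < l ∧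
        a i j = true ∧ a i l = true ∧ a k j = true)


lemma colOnes_eq_sum (a : ℕ → ℕ → Bool) (k l : ℕ) :
    colOnes a k l = ∑ i ∈ Finset.Ico 1 k, (if a i l = true then 1 else 0) :=
  Finset.card_filter _ _

lemma rowOnes_eq_sum (a : ℕ → ℕ → Bool) (k l : ℕ) :
    rowOnes a k l = ∑ j ∈ Finset.Ico 1 l, (if a k j = true then 1 else 0) :=
  Finset.card_filter _ _

lemma pos_of_true {n : ℕ} {a : ℕ → ℕ → Bool} (h : IsGreedy n a) {i j : ℕ}
    (ht : a i j = true) : 1 ≤ i ∧ 1 ≤ j := by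
  constructor
  · rcases Nat.eq_zero_or_pos i with hi | hi
    · rw [h.1 i j (Or.inl hi)] at ht; exact absurd ht (by simp)
    · exact hi
  · rcases Nat.eq_zero_or_pos j with hj | hj
    · rw [h.1 i j (Or.inr hj)] at ht; exact absurd ht (by simp)
    · exact hj

lemma colOnes_mono {a : ℕ → ℕ → Bool} {i k l : ℕ} (hik : i ≤ k) :
    colOnes a i l ≤ colOnes a k l :=
  Finset.card_le_card (Finset.filter_subset_filter _ (Finset.Ico_subset_Ico le_rfl hik))

lemma rowOnes_mono {a : ℕ → ℕ → Bool} {k l l' : ℕ} (hll : l ≤ l') :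
    rowOnes a k l ≤ rowOnes a k l' :=
  Finset.card_le_card (Finset.filter_subset_filter _ (Finset.Ico_subset_Ico le_rfl hll))

lemma colOnes_le {n : ℕ} {a : ℕ → ℕ → Bool} (h : IsGreedy n a) (k l : ℕ) :
    colOnes a k l ≤ n + 1 := by
  induction k with
  | zero => simp [colOnes]
  | succ K IH =>
    rcases Nat.lt_or_ge K 1 with hK | hK
    · interval_cases K
      simp [colOnes]
    · have hsplit : colOnes a (K + 1) l
          = colOnes a K l + (if a K l = true then 1 else 0) := by
        rw [colOnes_eq_sum, colOnes_eq_sum, Finset.sum_Ico_succ_top hK]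
      rw [hsplit]
      by_cases hKl : a K l = true
      · have hl : 1 ≤ l := (pos_of_true h hKl).2
        have := ((h.2 K l hK hl).mp hKl).2.1
        have h1 : (if a K l = true then 1 else 0) = 1 := by simp [hKl]
        omega
      · have h0 : (if a K l = true then 1 else 0) = 0 := by simp [hKl]
        omega

lemma rowOnes_le {n : ℕ} {a : ℕ → ℕ → Bool} (h : IsGreedy n a) (k l : ℕ) :
    rowOnes a k l ≤ n + 1 := by
  induction l with
  | zero => simp [rowOnes]
  | succ L IH =>
    rcases Nat.lt_or_ge L 1 with hL | hL
    · interval_cases L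
      simp [rowOnes]
    · have hsplit : rowOnes a k (L + 1)
          = rowOnes a k L + (if a k L = true then 1 else 0) := by
        rw [rowOnes_eq_sum, rowOnes_eq_sum, Finset.sum_Ico_succ_top hL]
      rw [hsplit]
      by_cases hkL : a k L = true
      · have hk1 : 1 ≤ k := (pos_of_true h hkL).1
        have := ((h.2 k L hk1 hL).mp hkL).1
        have h1 : (if a k L = true then 1 else 0) = 1 := by simp [hkL]
        omega
      · have h0 : (if a k L = true then 1 else 0) = 0 := by simp [hkL]
        omega

/-- Rows above `F` (the first row with a one in column `L`) have no ones in
columns `≥ L`, where `L` is a non-complete column for row `K`. -/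
lemma blocked {n : ℕ} {a : ℕ → ℕ → Bool} (h : IsGreedy n a) (K L F : ℕ)
    (hKL : colOnes a K L < n + 1) (hL : 1 ≤ L)
    (hF : ∀ i, 1 ≤ i → i < K → a i L = true → F ≤ i) :
    ∀ i j, 1 ≤ i → i < F → i < K → L ≤ j → a i j = false := by
  intro i j hi1 hiF hiK hLj
  by_contra hne
  have ht : a i j = true := by
    cases hb : a i j with
    | false => exact absurd hb hne
    | true => rfl
  have hiL : ¬ a i L = true := fun hL' => absurd (hF i hi1 hiK hL') (by omega)
  have hj : L < j := by
    rcases Nat.lt_or_ge L j with h' | h'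
    · exact h'
    · have : L = j := le_antisymm hLj h'
      exact absurd (this ▸ ht) hiL
  have hgj := (h.2 i j hi1 (by omega)).mp ht
  have hgL := (h.2 i L hi1 hL).mp
  -- a i L is false, so the greedy condition fails at (i, L)
  have hfail : ¬ (rowOnes a i L < n + 1 ∧ colOnes a i L < n + 1 ∧
      ¬ ∃ i' j', 1 ≤ i' ∧ i' < i ∧ 1 ≤ j' ∧ j' < L ∧
        a i' j' = true ∧ a i' L = true ∧ a i j' = true) := by
    intro hc
    exact hiL ((h.2 i L hi1 hL).mpr hc)
  push_neg at hfail
  rcases Nat.lt_or_ge (rowOnes a i L) (n + 1) with hr | hr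
  · rcases Nat.lt_or_ge (colOnes a i L) (n + 1) with hc | hc
    · obtain ⟨i', j', h1, h2, h3, h4, h5, h6, _⟩ := hfail hr hc
      exact absurd (hF i' h1 (by omega) h6) (by omega)
    · have : colOnes a i L ≤ colOnes a K L := colOnes_mono (by omega)
      omega
  · have : rowOnes a i L ≤ rowOnes a i j := rowOnes_mono (by omega)
    omega

/-- Each of the first `K-1` rows contains exactly `n+1` ones among columns `1..C`,
where `C` bounds all columns with ones in the first `K-1` rows. -/
lemma row_full {n : ℕ} {a : ℕ → ℕ → Bool} (h : IsGreedy n a) (K C : ℕ)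
    (hmax : ∀ i j, 1 ≤ i → i < K → a i j = true → j ≤ C) :
    ∀ i, 1 ≤ i → i < K → rowOnes a i (C + 1) = n + 1 := by
  intro i hi1 hiK
  have hle := rowOnes_le h i (C + 1)
  by_contra hne
  have hlt : rowOnes a i (C + 1) < n + 1 := lt_of_le_of_ne hle hne
  have hcolF : ∀ i', 1 ≤ i' → i' < K → a i' (C + 1) = false := by
    intro i' h1 h2
    cases hb : a i' (C + 1) with
    | false => rfl
    | true => exact absurd (hmax i' (C + 1) h1 h2 hb) (by omega)
  have hcol0 : colOnes a i (C + 1) = 0 := by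
    rw [colOnes_eq_sum]
    apply Finset.sum_eq_zero
    intro i' hi'
    rw [Finset.mem_Ico] at hi'
    rw [hcolF i' hi'.1 (by omega)]
    simp
  have ht : a i (C + 1) = true := by
    apply (h.2 i (C + 1) hi1 (by omega)).mpr
    refine ⟨hlt, by omega, ?_⟩
    rintro ⟨i', j', h1, h2, h3, h4, h5, h6, h7⟩
    exact absurd (hcolF i' h1 (by omega)) (by rw [h6]; simp)
  exact absurd (hmax i (C + 1) hi1 hiK ht) (by omega)

/-- Counting identity: the first `K-1` rows contain `(K-1)(n+1)` ones, of which
`(L-1)(n+1)` lie in the complete columns left of `L`, and the rest form the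
defining-matrix block with rows `F..K-1` and columns `L..C`. -/
lemma count_identity {n : ℕ} {a : ℕ → ℕ → Bool} (h : IsGreedy n a) (K L F C : ℕ)
    (hL1 : 1 ≤ L) (hL2 : colOnes a K L < n + 1)
    (hL3 : ∀ l, 1 ≤ l → colOnes a K l < n + 1 → L ≤ l)
    (hF1 : 1 ≤ F) (hF2 : F < K) (hF3 : a F L = true)
    (hF4 : ∀ i, 1 ≤ i → i < K → a i L = true → F ≤ i)
    (hC : ∀ i j, 1 ≤ i → i < K → a i j = true → j ≤ C) :
    (K - 1) * (n + 1) = (L - 1) * (n + 1) +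
      ∑ j0 ∈ Finset.range (C + 1 - L), ∑ i0 ∈ Finset.range (K - F),
        (if a (F + i0) (L + j0) = true then 1 else 0) := by
  have hLC : L ≤ C := hC F L hF1 hF2 hF3
  -- total number of ones in rows 1..K-1, columns 1..C
  have hN1 : ∑ i ∈ Finset.Ico 1 K, ∑ j ∈ Finset.Ico 1 (C + 1),
      (if a i j = true then 1 else 0) = (K - 1) * (n + 1) := by
    have : ∀ i ∈ Finset.Ico 1 K, (∑ j ∈ Finset.Ico 1 (C + 1),
        (if a i j = true then 1 else 0)) = n + 1 := by
      intro i hi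
      rw [Finset.mem_Ico] at hi
      rw [← rowOnes_eq_sum]
      exact row_full h K C hC i hi.1 hi.2
    rw [Finset.sum_congr rfl this, Finset.sum_const, Nat.card_Ico, smul_eq_mul]
  -- the same total, counted by columns
  have hN2 : ∑ i ∈ Finset.Ico 1 K, ∑ j ∈ Finset.Ico 1 (C + 1),
      (if a i j = true then 1 else 0)
      = ∑ j ∈ Finset.Ico 1 (C + 1), colOnes a K j := by
    rw [Finset.sum_comm]
    exact Finset.sum_congr rfl fun j _ => (colOnes_eq_sum a K j).symm
  -- split the columns at L
  have hsplit : (∑ j ∈ Finset.Ico 1 L, colOnes a K j) +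
      (∑ j ∈ Finset.Ico L (C + 1), colOnes a K j)
      = ∑ j ∈ Finset.Ico 1 (C + 1), colOnes a K j :=
    Finset.sum_Ico_consecutive _ hL1 (by omega)
  -- columns left of L are complete
  have hleft : ∑ j ∈ Finset.Ico 1 L, colOnes a K j = (L - 1) * (n + 1) := by
    have : ∀ j ∈ Finset.Ico 1 L, colOnes a K j = n + 1 := by
      intro j hj
      rw [Finset.mem_Ico] at hj
      have h1 := colOnes_le h K j
      have h2 : ¬ colOnes a K j < n + 1 := fun hc =>
        absurd (hL3 j hj.1 hc) (by omega)
      omega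
    rw [Finset.sum_congr rfl this, Finset.sum_const, Nat.card_Ico, smul_eq_mul]
  -- columns from L on: ones only in rows F..K-1
  have hright : ∑ j ∈ Finset.Ico L (C + 1), colOnes a K j
      = ∑ j0 ∈ Finset.range (C + 1 - L), ∑ i0 ∈ Finset.range (K - F),
        (if a (F + i0) (L + j0) = true then 1 else 0) := by
    rw [Finset.sum_Ico_eq_sum_range]
    apply Finset.sum_congr rfl
    intro j0 hj0
    rw [colOnes_eq_sum]
    have hsp : (∑ i ∈ Finset.Ico 1 F, (if a i (L + j0) = true then 1 else 0)) +
        (∑ i ∈ Finset.Ico F K, (if a i (L + j0) = true then 1 else 0))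
        = ∑ i ∈ Finset.Ico 1 K, (if a i (L + j0) = true then 1 else 0) :=
      Finset.sum_Ico_consecutive _ hF1 (by omega)
    have hz : ∑ i ∈ Finset.Ico 1 F, (if a i (L + j0) = true then 1 else 0) = 0 := by
      apply Finset.sum_eq_zero
      intro i hi
      rw [Finset.mem_Ico] at hi
      rw [blocked h K L F hL2 hL1 hF4 i (L + j0) hi.1 hi.2 (by omega) (by omega)]
      simp
    rw [← hsp, hz, Nat.zero_add, Finset.sum_Ico_eq_sum_range]
  omega

/-- Lemma 3.4: if the defining matrices satisfy `M^(k+p̄) = M^k` (same dimensions and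
same entries), then `l(k+p̄) = l(k) + p̄`, where `l(k)` is the least index of a column
containing fewer than `n+1` ones among the first `k-1` rows, `fk` is the least row
with a one in column `l(k)`, and `ck` the largest column with a one in the first
`k-1` rows. -/
theorem stmt15 (n : ℕ) (a : ℕ → ℕ → Bool) (h : IsGreedy n a)
    (k pbar : ℕ) (hk : 2 ≤ k) (hpbar : 1 ≤ pbar)
    (lk lk' fk fk' ck ck' : ℕ)
    (hlk : 1 ≤ lk ∧ colOnes a k lk < n + 1 ∧
      ∀ l, 1 ≤ l → colOnes a k l < n + 1 → lk ≤ l)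
    (hlk' : 1 ≤ lk' ∧ colOnes a (k + pbar) lk' < n + 1 ∧
      ∀ l, 1 ≤ l → colOnes a (k + pbar) l < n + 1 → lk' ≤ l)
    (hfk : 1 ≤ fk ∧ fk < k ∧ a fk lk = true ∧
      ∀ i, 1 ≤ i → i < k → a i lk = true → fk ≤ i)
    (hfk' : 1 ≤ fk' ∧ fk' < k + pbar ∧ a fk' lk' = true ∧
      ∀ i, 1 ≤ i → i < k + pbar → a i lk' = true → fk' ≤ i)
    (hck : (∃ i, 1 ≤ i ∧ i < k ∧ a i ck = true) ∧
      ∀ i j, 1 ≤ i → i < k → a i j = true → j ≤ ck)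
    (hck' : (∃ i, 1 ≤ i ∧ i < k + pbar ∧ a i ck' = true) ∧
      ∀ i j, 1 ≤ i → i < k + pbar → a i j = true → j ≤ ck')
    (hdim : k - fk = (k + pbar) - fk' ∧ ck + 1 - lk = ck' + 1 - lk')
    (hM : ∀ i j, i < k - fk → j < ck + 1 - lk →
      a (fk' + i) (lk' + j) = a (fk + i) (lk + j)) :
    lk' = lk + pbar := by
  obtain ⟨hlk1, hlk2, hlk3⟩ := hlk
  obtain ⟨hlk'1, hlk'2, hlk'3⟩ := hlk'
  obtain ⟨hfk1, hfk2, hfk3, hfk4⟩ := hfk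
  obtain ⟨hfk'1, hfk'2, hfk'3, hfk'4⟩ := hfk'
  have hE1 := count_identity h k lk fk ck hlk1 hlk2 hlk3 hfk1 hfk2 hfk3 hfk4 hck.2
  have hE2 := count_identity h (k + pbar) lk' fk' ck' hlk'1 hlk'2 hlk'3
    hfk'1 hfk'2 hfk'3 hfk'4 hck'.2
  -- the two blocks carry the same number of ones
  have hS : ∑ j0 ∈ Finset.range (ck' + 1 - lk'), ∑ i0 ∈ Finset.range (k + pbar - fk'),
        (if a (fk' + i0) (lk' + j0) = true then 1 else 0)
      = ∑ j0 ∈ Finset.range (ck + 1 - lk), ∑ i0 ∈ Finset.range (k - fk),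
        (if a (fk + i0) (lk + j0) = true then 1 else 0) := by
    rw [← hdim.1, ← hdim.2]
    apply Finset.sum_congr rfl
    intro j0 hj0
    apply Finset.sum_congr rfl
    intro i0 hi0
    rw [Finset.mem_range] at hi0 hj0
    rw [hM i0 j0 hi0 hj0]
  rw [hS] at hE2
  -- cancel the common block sum and the factor (n+1)
  set S := ∑ j0 ∈ Finset.range (ck + 1 - lk), ∑ i0 ∈ Finset.range (k - fk),
    (if a (fk + i0) (lk + j0) = true then 1 else 0) with hSdef
  have hsum : (k - 1) * (n + 1) + (lk' - 1) * (n + 1)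
      = (k + pbar - 1) * (n + 1) + (lk - 1) * (n + 1) := by omega
  rw [← Nat.add_mul, ← Nat.add_mul] at hsum
  have := Nat.eq_of_mul_eq_mul_right (by omega : 0 < n + 1) hsum
  omega
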